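/- arXiv:1702.05801 — 2 statements merged into one kernel-verified Lean document; each statement's English description precedes it below -/
import Mathlib

section
/- Let Ω ⊆ ℝ² be open and let U : Ω → ℝ³ be a C² map with |U(x)| = 1 for all x which satisfies the harmonic map equation ΔU + |∇U|² U = 0 in Ω. Define, for a C² map Φ : Ω → ℝ³, the projection Π_{U⊥}Φ = Φ − (Φ·U)U and the operator L_U[ψ] = Δψ + |∇U|² ψ + 2(∇U·∇ψ) U, where ∇U·∇ψ = Σ_{i=1}^{2} ∂_{x_i}U · ∂_{x_i}ψ. Then for every C² map Φ : Ω → ℝ³ one has, pointwise in Ω, L_U[Π_{U⊥}Φ] = Π_{U⊥}(ΔΦ) + |∇U|² Π_{U⊥}Φ − 2 Σ_{i=1}^{2} ∂_{x_i}(Φ·U) ∂_{x_i}U. -/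
noncomputable section

open Real Set

abbrev R2 : Type := ℝ × ℝ
abbrev R3 : Type := ℝ × ℝ × ℝ

/-- Euclidean inner product on `ℝ³`. -/
def dot3 (a b : R3) : ℝ := a.1 * b.1 + a.2.1 * b.2.1 + a.2.2 * b.2.2

/-- Partial derivative in the first variable. -/
def pd1 {E : Type*} [NormedAddCommGroup E] [NormedSpace ℝ E] (u : R2 → E) (x : R2) : E :=
  fderiv ℝ u x (1, 0)

/-- Partial derivative in the second variable. -/
def pd2 {E : Type*} [NormedAddCommGroup E] [NormedSpace ℝ E] (u : R2 → E) (x : R2) : E :=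
  fderiv ℝ u x (0, 1)

/-- Componentwise Laplacian of a map `ℝ² → ℝ³`. -/
def lap3 (u : R2 → R3) (x : R2) : R3 := pd1 (pd1 u) x + pd2 (pd2 u) x

/-- `|∇u|² = Σᵢ |∂_{xᵢ} u|²`. -/
def gradSq (u : R2 → R3) (x : R2) : ℝ :=
  dot3 (pd1 u x) (pd1 u x) + dot3 (pd2 u x) (pd2 u x)

/-- The projection onto the orthogonal complement of `U`: `Π_{U⊥}Φ = Φ − (Φ·U)U`. -/
def projPerp (U Φ : R2 → R3) (x : R2) : R3 := Φ x - dot3 (Φ x) (U x) • U x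

/-- The linearized operator `L_U[ψ] = Δψ + |∇U|² ψ + 2(∇U·∇ψ) U`. -/
def LUop (U ψ : R2 → R3) (x : R2) : R3 :=
  lap3 ψ x + gradSq U x • ψ x
    + (2 * (dot3 (pd1 U x) (pd1 ψ x) + dot3 (pd2 U x) (pd2 ψ x))) • U x

lemma diffAt_dot3 {f g : R2 → R3} {x : R2} (hf : DifferentiableAt ℝ f x)
    (hg : DifferentiableAt ℝ g x) :
    DifferentiableAt ℝ (fun y => dot3 (f y) (g y)) x := by
  simp only [dot3]
  exact ((hf.fst.mul hg.fst).add (hf.snd.fst.mul hg.snd.fst)).add (hf.snd.snd.mul hg.snd.snd)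

lemma fderiv_dot3 {f g : R2 → R3} {x : R2} (v : R2)
    (hf : DifferentiableAt ℝ f x) (hg : DifferentiableAt ℝ g x) :
    fderiv ℝ (fun y => dot3 (f y) (g y)) x v
      = dot3 (fderiv ℝ f x v) (g x) + dot3 (f x) (fderiv ℝ g x v) := by
  have Hf := hf.hasFDerivAt
  have Hg := hg.hasFDerivAt
  have h := ((Hf.fst.mul Hg.fst).add (Hf.snd.fst.mul Hg.snd.fst)).add (Hf.snd.snd.mul Hg.snd.snd)
  simp only [dot3]
  have h' : HasFDerivAt (fun y => (f y).1 * (g y).1 + (f y).2.1 * (g y).2.1 + (f y).2.2 * (g y).2.2) _ x := h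
  rw [h'.fderiv]
  simp [dot3]
  ring

lemma fderiv_smul3 {c : R2 → ℝ} {f : R2 → R3} {x : R2} (v : R2)
    (hc : DifferentiableAt ℝ c x) (hf : DifferentiableAt ℝ f x) :
    fderiv ℝ (fun y => c y • f y) x v
      = (fderiv ℝ c x v) • f x + c x • fderiv ℝ f x v := by
  rw [fderiv_fun_smul hc hf]
  simp
  abel

lemma dot3_add_left (a b c : R3) : dot3 (a + b) c = dot3 a c + dot3 b c := by
  simp only [dot3, Prod.fst_add, Prod.snd_add]; ring

lemma dot3_sub_right (a b c : R3) : dot3 a (b - c) = dot3 a b - dot3 a c := by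
  simp only [dot3, Prod.fst_sub, Prod.snd_sub]; ring

lemma dot3_smul_right (r : ℝ) (a b : R3) : dot3 a (r • b) = r * dot3 a b := by
  simp only [dot3, Prod.smul_fst, Prod.smul_snd, smul_eq_mul]; ring

lemma dot3_neg_right (a b : R3) : dot3 a (-b) = -dot3 a b := by
  simp only [dot3, Prod.fst_neg, Prod.snd_neg]; ring

lemma dot3_comm (a b : R3) : dot3 a b = dot3 b a := by
  simp only [dot3]; ring

section helpers
variable {Ω : Set R2} {U Φ : R2 → R3} {x : R2}

lemma diffAt_of_C2 (hΩ : IsOpen Ω) (hU : ContDiffOn ℝ 2 U Ω) (hx : x ∈ Ω) :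
    DifferentiableAt ℝ U x :=
  (hU.contDiffAt (hΩ.mem_nhds hx)).differentiableAt (by norm_num)

lemma diffAt_pd (hΩ : IsOpen Ω) (hU : ContDiffOn ℝ 2 U Ω) (hx : x ∈ Ω) (v : R2) :
    DifferentiableAt ℝ (fun y => fderiv ℝ U y v) x := by
  have h1 : ContDiffAt ℝ 2 U x := hU.contDiffAt (hΩ.mem_nhds hx)
  have h2 : ContDiffAt ℝ 1 (fderiv ℝ U) x := h1.fderiv_right (by norm_num)
  exact (h2.differentiableAt (by norm_num)).clm_apply (differentiableAt_const v)

lemma keyD (hΩ : IsOpen Ω) (hU : ContDiffOn ℝ 2 U Ω) (hΦ : ContDiffOn ℝ 2 Φ Ω)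
    (hx : x ∈ Ω) (v : R2) :
    fderiv ℝ (projPerp U Φ) x v
      = fderiv ℝ Φ x v
        - (dot3 (fderiv ℝ Φ x v) (U x) + dot3 (Φ x) (fderiv ℝ U x v)) • U x
        - dot3 (Φ x) (U x) • fderiv ℝ U x v := by
  have hdU := diffAt_of_C2 hΩ hU hx
  have hdΦ := diffAt_of_C2 hΩ hΦ hx
  have hc : DifferentiableAt ℝ (fun y => dot3 (Φ y) (U y)) x := diffAt_dot3 hdΦ hdU
  have hP : projPerp U Φ = fun y => Φ y - dot3 (Φ y) (U y) • U y := rfl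
  rw [hP, fderiv_fun_sub hdΦ (hc.fun_smul hdU)]
  simp only [ContinuousLinearMap.sub_apply]
  rw [fderiv_smul3 v hc hdU, fderiv_dot3 v hdΦ hdU]
  abel

lemma key (hΩ : IsOpen Ω) (hU : ContDiffOn ℝ 2 U Ω) (hΦ : ContDiffOn ℝ 2 Φ Ω)
    (hx : x ∈ Ω) (v : R2) :
    fderiv ℝ (fun y => fderiv ℝ (projPerp U Φ) y v) x v
      = fderiv ℝ (fun y => fderiv ℝ Φ y v) x v
        - (dot3 (fderiv ℝ (fun y => fderiv ℝ Φ y v) x v) (U x)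
            + 2 * dot3 (fderiv ℝ Φ x v) (fderiv ℝ U x v)
            + dot3 (Φ x) (fderiv ℝ (fun y => fderiv ℝ U y v) x v)) • U x
        - (2 * (dot3 (fderiv ℝ Φ x v) (U x) + dot3 (Φ x) (fderiv ℝ U x v))) • fderiv ℝ U x v
        - dot3 (Φ x) (U x) • fderiv ℝ (fun y => fderiv ℝ U y v) x v := by
  have heq : (fun y => fderiv ℝ (projPerp U Φ) y v) =ᶠ[nhds x]
      (fun y => (fun z => fderiv ℝ Φ z v) y
        - (dot3 ((fun z => fderiv ℝ Φ z v) y) (U y)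
            + dot3 (Φ y) ((fun z => fderiv ℝ U z v) y)) • U y
        - dot3 (Φ y) (U y) • (fun z => fderiv ℝ U z v) y) := by
    filter_upwards [hΩ.mem_nhds hx] with y hy
    exact keyD hΩ hU hΦ hy v
  rw [heq.fderiv_eq]
  have hdU := diffAt_of_C2 hΩ hU hx
  have hdΦ := diffAt_of_C2 hΩ hΦ hx
  have hdDU := diffAt_pd hΩ hU hx v
  have hdDΦ := diffAt_pd hΩ hΦ hx v
  have hs : DifferentiableAt ℝ
      (fun y => dot3 (fderiv ℝ Φ y v) (U y) + dot3 (Φ y) (fderiv ℝ U y v)) x :=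
    (diffAt_dot3 hdDΦ hdU).add (diffAt_dot3 hdΦ hdDU)
  have hc : DifferentiableAt ℝ (fun y => dot3 (Φ y) (U y)) x := diffAt_dot3 hdΦ hdU
  rw [fderiv_fun_sub (hdDΦ.fun_sub (hs.fun_smul hdU)) (hc.fun_smul hdDU)]
  simp only [ContinuousLinearMap.sub_apply]
  rw [fderiv_fun_sub hdDΦ (hs.fun_smul hdU)]
  simp only [ContinuousLinearMap.sub_apply]
  rw [fderiv_smul3 v hs hdU, fderiv_smul3 v hc hdDU, fderiv_dot3 v hdΦ hdU]
  have hsv : fderiv ℝ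
      (fun y => dot3 (fderiv ℝ Φ y v) (U y) + dot3 (Φ y) (fderiv ℝ U y v)) x v
      = (dot3 (fderiv ℝ (fun y => fderiv ℝ Φ y v) x v) (U x)
          + dot3 (fderiv ℝ Φ x v) (fderiv ℝ U x v))
        + (dot3 (fderiv ℝ Φ x v) (fderiv ℝ U x v)
          + dot3 (Φ x) (fderiv ℝ (fun y => fderiv ℝ U y v) x v)) := by
    rw [fderiv_fun_add (diffAt_dot3 hdDΦ hdU) (diffAt_dot3 hdΦ hdDU)]
    simp only [ContinuousLinearMap.add_apply]
    rw [fderiv_dot3 v hdDΦ hdU, fderiv_dot3 v hdΦ hdDU]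
  rw [hsv]
  module

end helpers

/-- For a `C²` harmonic map `U` into the sphere and any `C²` map `Φ`,
`L_U[Π_{U⊥}Φ] = Π_{U⊥}(ΔΦ) + |∇U|² Π_{U⊥}Φ − 2 Σᵢ ∂_{xᵢ}(Φ·U) ∂_{xᵢ}U`
pointwise in `Ω`. -/
theorem LU_of_projection (Ω : Set R2) (hΩ : IsOpen Ω) (U : R2 → R3)
    (hU : ContDiffOn ℝ 2 U Ω)
    (hUnorm : ∀ x ∈ Ω, dot3 (U x) (U x) = 1)
    (hUharm : ∀ x ∈ Ω, lap3 U x + gradSq U x • U x = 0)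
    (Φ : R2 → R3) (hΦ : ContDiffOn ℝ 2 Φ Ω) :
    ∀ x ∈ Ω,
      LUop U (projPerp U Φ) x
        = (lap3 Φ x - dot3 (lap3 Φ x) (U x) • U x)
          + gradSq U x • projPerp U Φ x
          - (2 * pd1 (fun y => dot3 (Φ y) (U y)) x) • pd1 U x
          - (2 * pd2 (fun y => dot3 (Φ y) (U y)) x) • pd2 U x := by
  intro x hx
  have hdU := diffAt_of_C2 hΩ hU hx
  have hdΦ := diffAt_of_C2 hΩ hΦ hx
  have hk1 : pd1 (pd1 (projPerp U Φ)) x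
      = pd1 (pd1 Φ) x
        - (dot3 (pd1 (pd1 Φ) x) (U x) + 2 * dot3 (pd1 Φ x) (pd1 U x)
            + dot3 (Φ x) (pd1 (pd1 U) x)) • U x
        - (2 * (dot3 (pd1 Φ x) (U x) + dot3 (Φ x) (pd1 U x))) • pd1 U x
        - dot3 (Φ x) (U x) • pd1 (pd1 U) x := key hΩ hU hΦ hx (1, 0)
  have hk2 : pd2 (pd2 (projPerp U Φ)) x
      = pd2 (pd2 Φ) x
        - (dot3 (pd2 (pd2 Φ) x) (U x) + 2 * dot3 (pd2 Φ x) (pd2 U x)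
            + dot3 (Φ x) (pd2 (pd2 U) x)) • U x
        - (2 * (dot3 (pd2 Φ x) (U x) + dot3 (Φ x) (pd2 U x))) • pd2 U x
        - dot3 (Φ x) (U x) • pd2 (pd2 U) x := key hΩ hU hΦ hx (0, 1)
  have hd1 : pd1 (projPerp U Φ) x
      = pd1 Φ x - (dot3 (pd1 Φ x) (U x) + dot3 (Φ x) (pd1 U x)) • U x
        - dot3 (Φ x) (U x) • pd1 U x := keyD hΩ hU hΦ hx (1, 0)
  have hd2 : pd2 (projPerp U Φ) x
      = pd2 Φ x - (dot3 (pd2 Φ x) (U x) + dot3 (Φ x) (pd2 U x)) • U x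
        - dot3 (Φ x) (U x) • pd2 U x := keyD hΩ hU hΦ hx (0, 1)
  have hs1 : pd1 (fun y => dot3 (Φ y) (U y)) x
      = dot3 (pd1 Φ x) (U x) + dot3 (Φ x) (pd1 U x) := fderiv_dot3 (1, 0) hdΦ hdU
  have hs2 : pd2 (fun y => dot3 (Φ y) (U y)) x
      = dot3 (pd2 Φ x) (U x) + dot3 (Φ x) (pd2 U x) := fderiv_dot3 (0, 1) hdΦ hdU
  -- orthogonality
  have hev : (fun y => dot3 (U y) (U y)) =ᶠ[nhds x] (fun _ => (1 : ℝ)) := by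
    filter_upwards [hΩ.mem_nhds hx] with y hy
    exact hUnorm y hy
  have h0 : fderiv ℝ (fun y => dot3 (U y) (U y)) x = 0 := by
    rw [hev.fderiv_eq]; exact fderiv_const_apply 1
  have horth : ∀ v : R2, dot3 (fderiv ℝ U x v) (U x) = 0 := by
    intro v
    have h := fderiv_dot3 v hdU hdU
    rw [h0] at h
    rw [dot3_comm (U x) (fderiv ℝ U x v)] at h
    simp at h
    linarith
  have horth1 : dot3 (pd1 U x) (U x) = 0 := horth (1, 0)
  have horth2 : dot3 (pd2 U x) (U x) = 0 := horth (0, 1)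
  -- harmonicity
  have hharm : pd2 (pd2 U) x = -(gradSq U x • U x) - pd1 (pd1 U) x := by
    have h := hUharm x hx
    simp only [lap3] at h
    have hAB : pd1 (pd1 U) x + pd2 (pd2 U) x = -(gradSq U x • U x) :=
      eq_neg_of_add_eq_zero_left h
    rw [← hAB]; abel
  simp only [LUop, lap3, gradSq, projPerp]
  rw [hk1, hk2, hd1, hd2, hs1, hs2, hharm]
  simp only [dot3_sub_right, dot3_smul_right, dot3_neg_right, horth1, horth2]
  simp only [gradSq] at *
  rw [dot3_add_left, dot3_comm (pd1 U x) (pd1 Φ x), dot3_comm (pd2 U x) (pd2 Φ x)]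
  module
end
end

section
/- Let λ₀(t) = |log T| (T−t)/|log(T−t)|² for t < T, with T ∈ (0,1/2) sufficiently small. (a) For every a > 1 and b > 0 there is a constant C = C(a,b) such that for all t ∈ [0, T): ∫_{−T}^{t−λ₀(t)²} (t−s)^{−a} |log(T−s)|^{−b} ds ≤ C λ₀(t)^{2(1−a)} / |log(T−t)|^{b}. (b) For every μ ∈ (0,1) and l ∈ ℝ there is a constant C = C(μ,l) such that for all t ∈ [0, T): ∫_{−T}^{t−λ₀(t)²} (T−s)^{μ} (t−s)^{−2} |log(T−s)|^{−l} ds ≤ C (T−t)^{μ} / (λ₀(t)² |log(T−t)|^{l}). -/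
noncomputable section

open Real Set MeasureTheory

/-- The reference scaling parameter `λ₀(t) = |log T| (T−t)/|log(T−t)|²`. -/
def lam0 (T t : ℝ) : ℝ := |Real.log T| * (T - t) / (Real.log (T - t)) ^ 2




/-- bilateral power bound -/
lemma pow_neg_bound {y z c : ℝ} (r : ℝ) (hz : 0 < z) (hc : 1 ≤ c)
    (h1 : z / c ≤ y) (h2 : y ≤ c * z) : y ^ (-r) ≤ c ^ |r| * z ^ (-r) := by
  have hc0 : 0 < c := by linarith
  have hy : 0 < y := lt_of_lt_of_le (by positivity) h1
  rcases le_or_gt 0 r with hr | hr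
  · rw [abs_of_nonneg hr]
    calc y ^ (-r) ≤ (z / c) ^ (-r) :=
          Real.rpow_le_rpow_of_nonpos (by positivity) h1 (by linarith)
      _ = c ^ r * z ^ (-r) := by
          rw [Real.div_rpow hz.le hc0.le, Real.rpow_neg hc0.le]; field_simp
  · rw [abs_of_neg hr]
    calc y ^ (-r) ≤ (c * z) ^ (-r) := Real.rpow_le_rpow hy.le h2 (by linarith)
      _ = c ^ (-r) * z ^ (-r) := Real.mul_rpow hc0.le hz.le

lemma log_add_bound {u x : ℝ} (hu : 0 < u) (hx : 0 < x) (hux : u + x ≤ 1)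
    (h9 : 9 ≤ -Real.log u) (h6 : -Real.log u ≤ 6 * (-Real.log x)) :
    (-Real.log u) / 12 ≤ -Real.log (u + x) ∧ -Real.log (u + x) ≤ -Real.log u := by
  have hup : 0 < u + x := by linarith
  have hlog2 : Real.log 2 < 0.6931471808 := Real.log_two_lt_d9
  constructor
  · rcases le_total u x with h | h
    · have l1 : Real.log (u + x) ≤ Real.log (2 * x) :=
        Real.log_le_log hup (by linarith)
      rw [Real.log_mul two_ne_zero hx.ne'] at l1
      linarith
    · have l1 : Real.log (u + x) ≤ Real.log (2 * u) :=
        Real.log_le_log hup (by linarith)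
      rw [Real.log_mul two_ne_zero hu.ne'] at l1
      linarith
  · have := Real.log_le_log hu (by linarith : u ≤ u + x); linarith

/-- The FTC comparison lemma. -/
lemma aux_ftc (a b : ℝ) (ha : 1 < a) :
    ∃ u₀ : ℝ, 0 < u₀ ∧ u₀ ≤ Real.exp (-9) ∧ ∀ ε A : ℝ, 0 < ε → ε ≤ A → A ≤ u₀ →
      ∫ u in ε..A, u ^ (-a) * |Real.log u| ^ (-b)
        ≤ 2 / (a - 1) * (ε ^ (1 - a) * |Real.log ε| ^ (-b)) := by
  have ha1 : 0 < a - 1 := by linarith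
  refine ⟨min (Real.exp (-9)) (Real.exp (-(1 + 2 * |b| / (a - 1)))), by positivity,
    min_le_left _ _, ?_⟩
  intro ε A hε hεA hA
  have hmem : ∀ u ∈ Set.Icc ε A, 0 < u ∧ 9 ≤ -Real.log u ∧ 1 + 2 * |b| / (a - 1) ≤ -Real.log u := by
    intro u hu
    have hu0 : 0 < u := lt_of_lt_of_le hε hu.1
    have h1 : u ≤ Real.exp (-9) := le_trans (le_trans hu.2 hA) (min_le_left _ _)
    have h2 : u ≤ Real.exp (-(1 + 2 * |b| / (a - 1))) :=
      le_trans (le_trans hu.2 hA) (min_le_right _ _)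
    have l1 : Real.log u ≤ -9 := by
      have := Real.log_le_log hu0 h1; rwa [Real.log_exp] at this
    have l2 : Real.log u ≤ -(1 + 2 * |b| / (a - 1)) := by
      have := Real.log_le_log hu0 h2; rwa [Real.log_exp] at this
    exact ⟨hu0, by linarith, by linarith⟩
  set g : ℝ → ℝ := fun u => -(u ^ (1 - a) * (-Real.log u) ^ (-b)) with hg
  set D : ℝ → ℝ := fun u => -(((1 - a) * u ^ (1 - a - 1)) * (-Real.log u) ^ (-b)
      + u ^ (1 - a) * ((-b * (-Real.log u) ^ (-b - 1)) * (-u⁻¹))) with hD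
  have huIcc : Set.uIcc ε A = Set.Icc ε A := Set.uIcc_of_le hεA
  have hderiv : ∀ u ∈ Set.uIcc ε A, HasDerivAt g (D u) u := by
    intro u hu
    rw [huIcc] at hu
    obtain ⟨hu0, h9, -⟩ := hmem u hu
    have hL : 0 < -Real.log u := by linarith
    have h1 : HasDerivAt (fun u : ℝ => u ^ (1 - a)) ((1 - a) * u ^ (1 - a - 1)) u :=
      Real.hasDerivAt_rpow_const (Or.inl hu0.ne')
    have h2a : HasDerivAt (fun u : ℝ => -Real.log u) (-u⁻¹) u :=
      (Real.hasDerivAt_log hu0.ne').neg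
    have h2b : HasDerivAt (fun z : ℝ => z ^ (-b)) (-b * (-Real.log u) ^ (-b - 1)) (-Real.log u) :=
      Real.hasDerivAt_rpow_const (Or.inl hL.ne')
    have h2 : HasDerivAt (fun u : ℝ => (-Real.log u) ^ (-b))
        ((-b * (-Real.log u) ^ (-b - 1)) * (-u⁻¹)) u := by
      have := h2b.comp u h2a; exact this
    exact (h1.mul h2).neg
  have hne : ∀ u ∈ Set.uIcc ε A, u ≠ 0 := by
    intro u hu; rw [huIcc] at hu; exact (hmem u hu).1.ne'
  have hlogne : ∀ u ∈ Set.uIcc ε A, -Real.log u ≠ 0 := by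
    intro u hu; rw [huIcc] at hu
    have := (hmem u hu).2.1; intro h; rw [h] at this; norm_num at this
  have hclog : ContinuousOn (fun u : ℝ => -Real.log u) (Set.uIcc ε A) := by
    apply ContinuousOn.neg
    apply Real.continuousOn_log.mono
    intro u hu; exact hne u hu
  have hcid : ContinuousOn (fun u : ℝ => u) (Set.uIcc ε A) := continuousOn_id
  have hcontD : ContinuousOn D (Set.uIcc ε A) := by
    apply ContinuousOn.neg
    apply ContinuousOn.add
    · exact (continuousOn_const.mul (hcid.rpow_const fun u hu => Or.inl (hne u hu))).mul
        (hclog.rpow_const fun u hu => Or.inl (hlogne u hu))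
    · exact (hcid.rpow_const fun u hu => Or.inl (hne u hu)).mul
        ((continuousOn_const.mul (hclog.rpow_const fun u hu => Or.inl (hlogne u hu))).mul
          ((hcid.inv₀ hne).neg))
  have hcontF : ContinuousOn (fun u : ℝ => u ^ (-a) * |Real.log u| ^ (-b)) (Set.uIcc ε A) := by
    apply ContinuousOn.mul
    · exact hcid.rpow_const fun u hu => Or.inl (hne u hu)
    · apply ContinuousOn.rpow_const
      · exact (Real.continuousOn_log.mono fun u hu => hne u hu).abs
      · intro u hu
        left
        rw [abs_ne_zero]
        intro h
        exact hlogne u hu (by rw [h]; ring)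
  have hDint : IntervalIntegrable D volume ε A := hcontD.intervalIntegrable
  have hFint : IntervalIntegrable (fun u : ℝ => u ^ (-a) * |Real.log u| ^ (-b)) volume ε A :=
    hcontF.intervalIntegrable
  have hInt : ∫ u in ε..A, D u = g A - g ε :=
    intervalIntegral.integral_eq_sub_of_hasDerivAt hderiv hDint
  have hFD : ∀ u ∈ Set.Icc ε A, u ^ (-a) * |Real.log u| ^ (-b) ≤ 2 / (a - 1) * D u := by
    intro u hu
    obtain ⟨hu0, h9, hKb⟩ := hmem u hu
    have hL : 0 < -Real.log u := by linarith
    have habs : |Real.log u| = -Real.log u := abs_of_nonpos (by linarith)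
    have e1 : u ^ (1 - a - 1) = u ^ (-a) := by rw [show (1 - a - 1 : ℝ) = -a by ring]
    have e2 : u ^ (1 - a) * u⁻¹ = u ^ (-a) := by
      rw [show (-a : ℝ) = (1 - a) + (-1) by ring, Real.rpow_add hu0, Real.rpow_neg_one]
    have e3 : (-Real.log u) ^ (-b - 1) = (-Real.log u) ^ (-b) * (-Real.log u)⁻¹ := by
      rw [show (-b - 1 : ℝ) = (-b) + (-1) by ring, Real.rpow_add hL, Real.rpow_neg_one]
    have hDu : D u = (a - 1) * (u ^ (-a) * (-Real.log u) ^ (-b))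
        - b * ((u ^ (1 - a) * u⁻¹) * ((-Real.log u) ^ (-b) * (-Real.log u)⁻¹)) := by
      rw [hD]; simp only; rw [e1, e3]; ring
    rw [e2] at hDu
    rw [habs, hDu]
    have hP : 0 < u ^ (-a) * (-Real.log u) ^ (-b) := by positivity
    have hbK : b * (-Real.log u)⁻¹ ≤ (a - 1) / 2 := by
      have h1 : b ≤ |b| := le_abs_self b
      have h2 : 2 * |b| / (a - 1) ≤ -Real.log u := by linarith
      have h3 : 2 * |b| ≤ (a - 1) * (-Real.log u) := by
        rw [div_le_iff₀ ha1] at h2; linarith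
      rw [mul_inv_le_iff₀ hL]
      nlinarith
    rw [div_mul_eq_mul_div, le_div_iff₀ ha1]
    nlinarith [mul_le_mul_of_nonneg_right hbK hP.le, hL, hP,
      mul_pos hL hP]
  have hgA : 0 ≤ A ^ (1 - a) * (-Real.log A) ^ (-b) := by
    obtain ⟨hA0, h9A, -⟩ := hmem A ⟨hεA, le_refl _⟩
    have : (0:ℝ) < -Real.log A := by linarith
    positivity
  have habsε : |Real.log ε| = -Real.log ε := by
    obtain ⟨-, h9ε, -⟩ := hmem ε ⟨le_refl _, hεA⟩
    exact abs_of_nonpos (by linarith)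
  calc ∫ u in ε..A, u ^ (-a) * |Real.log u| ^ (-b)
      ≤ ∫ u in ε..A, 2 / (a - 1) * D u :=
        intervalIntegral.integral_mono_on hεA hFint (hDint.const_mul _) hFD
    _ = 2 / (a - 1) * (g A - g ε) := by
        rw [intervalIntegral.integral_const_mul, hInt]
    _ ≤ 2 / (a - 1) * (ε ^ (1 - a) * |Real.log ε| ^ (-b)) := by
        apply mul_le_mul_of_nonneg_left _ (by positivity)
        rw [habsε, hg]
        simp only
        linarith


lemma lam0_facts {T t : ℝ} (hT : 0 < T) (hT' : T ≤ Real.exp (-9) / 2) (ht : 0 ≤ t) (htT : t < T) :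
    0 < lam0 T t ∧ lam0 T t ^ 2 ≤ T - t ∧
    -Real.log (T - t) ≤ -Real.log (lam0 T t ^ 2) ∧
    -Real.log (lam0 T t ^ 2) ≤ 6 * (-Real.log (T - t)) ∧
    9 ≤ -Real.log (T - t) ∧ |Real.log (T - t)| = -Real.log (T - t) := by
  have hx : 0 < T - t := by linarith
  have hexp1 : Real.exp (-9) < 1 := by
    rw [Real.exp_lt_one_iff]; norm_num
  have hT1 : T < 1 := by linarith
  have hlogT : Real.log T ≤ -9 := by
    have h1 : T ≤ Real.exp (-9) := by linarith
    have := Real.log_le_log hT h1; rwa [Real.log_exp] at this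
  have hx1 : T - t < 1 := by linarith
  have hlogx : Real.log (T - t) ≤ -9 := by
    have := Real.log_le_log hx (by linarith : T - t ≤ T); linarith
  set L : ℝ := -Real.log (T - t) with hL
  set L₀ : ℝ := -Real.log T with hL₀
  have hL9 : 9 ≤ L := by rw [hL]; linarith
  have hL₀9 : 9 ≤ L₀ := by rw [hL₀]; linarith
  have hL₀L : L₀ ≤ L := by
    have := Real.log_le_log hx (by linarith : T - t ≤ T)
    rw [hL, hL₀]; linarith
  have habsx : |Real.log (T - t)| = L := abs_of_nonpos (by linarith)
  have hlam : lam0 T t = L₀ * (T - t) / L ^ 2 := by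
    rw [lam0, abs_of_nonpos (by linarith : Real.log T ≤ 0), hL₀, hL]; ring
  have hlampos : 0 < lam0 T t := by
    rw [hlam]; positivity
  have hlamx : lam0 T t ≤ T - t := by
    rw [hlam, div_le_iff₀ (by positivity)]
    have hLL : L ≤ L ^ 2 := by nlinarith
    nlinarith [mul_le_mul_of_nonneg_right (le_trans hL₀L hLL) hx.le]
  have hlam2x : lam0 T t ^ 2 ≤ T - t := by nlinarith
  have hlb : -Real.log (T - t) ≤ -Real.log (lam0 T t ^ 2) := by
    have := Real.log_le_log (by positivity : (0:ℝ) < lam0 T t ^ 2) hlam2x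
    linarith
  have hub : -Real.log (lam0 T t ^ 2) ≤ 6 * L := by
    have e1 : Real.log (lam0 T t ^ 2) = 2 * Real.log (lam0 T t) := by
      rw [Real.log_pow]; norm_num
    have e2 : Real.log (lam0 T t) = Real.log L₀ + Real.log (T - t) - 2 * Real.log L := by
      rw [hlam, Real.log_div (by positivity) (by positivity), Real.log_mul (by positivity)
        hx.ne', Real.log_pow]
      push_cast; ring
    have h1 : Real.log L ≤ L - 1 := Real.log_le_sub_one_of_pos (by linarith)
    have h2 : 0 ≤ Real.log L₀ := Real.log_nonneg (by linarith)
    rw [e1, e2, hL]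
    linarith
  exact ⟨hlampos, hlam2x, hlb, hub, hL9, habsx⟩


lemma lam0_est_a : (∀ a b : ℝ, 1 < a → 0 < b → ∃ C > 0, ∃ T₀ > 0, T₀ ≤ 1 / 2 ∧
      ∀ T, 0 < T → T < T₀ → ∀ t, 0 ≤ t → t < T →
        (∫ s in (-T)..(t - lam0 T t ^ 2), (t - s) ^ (-a) * |Real.log (T - s)| ^ (-b))
          ≤ C * lam0 T t ^ (2 * (1 - a)) / |Real.log (T - t)| ^ b) := by
  intro a b ha hb
  obtain ⟨u₀, hu₀, hu₀e, Haux⟩ := aux_ftc a b ha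
  have ha1 : 0 < a - 1 := by linarith
  have hexp1 : Real.exp (-9) < 1 := by rw [Real.exp_lt_one_iff]; norm_num
  refine ⟨12 ^ b * (2 / (a - 1)), by positivity, u₀ / 4, by positivity, by linarith, ?_⟩
  intro T hT0 hTT₀ t ht htT
  have hTe : T ≤ Real.exp (-9) / 2 := by linarith
  obtain ⟨hlm0, hlm2x, hLε, hε6L, h9L, habsx⟩ := lam0_facts hT0 hTe ht htT
  have hx0 : 0 < T - t := by linarith
  set x : ℝ := T - t with hxdef
  set ε : ℝ := lam0 T t ^ 2 with hεdef
  set A : ℝ := t + T with hAdef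
  have hε0 : 0 < ε := by positivity
  have hεA : ε ≤ A := by rw [hAdef]; linarith
  have hAu₀ : A ≤ u₀ := by rw [hAdef]; linarith
  have hL0 : (0:ℝ) < -Real.log x := by linarith
  -- substitution
  have hsub : (∫ s in (-T)..(t - lam0 T t ^ 2), (t - s) ^ (-a) * |Real.log (T - s)| ^ (-b))
      = ∫ u in ε..A, u ^ (-a) * |Real.log (u + x)| ^ (-b) := by
    have h1 : (∫ s in (-T)..(t - lam0 T t ^ 2), (t - s) ^ (-a) * |Real.log (T - s)| ^ (-b))
        = ∫ s in (-T)..(t - lam0 T t ^ 2),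
            (fun u => u ^ (-a) * |Real.log (u + x)| ^ (-b)) (t - s) := by
      apply intervalIntegral.integral_congr
      intro s _
      simp only
      rw [show t - s + x = T - s by rw [hxdef]; ring]
    rw [h1, intervalIntegral.integral_comp_sub_left
      (fun u => u ^ (-a) * |Real.log (u + x)| ^ (-b)) t]
    congr 1
    · rw [hεdef]; ring
    · rw [hAdef]; ring
  -- pointwise facts on Icc
  have hpts : ∀ u ∈ Set.Icc ε A, 0 < u ∧ 0 < u + x ∧ u + x ≤ 1 ∧ Real.log (u + x) ≤ 0 ∧
      9 ≤ -Real.log u ∧ -Real.log u ≤ 6 * (-Real.log x) := by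
    intro u hu
    have hu0 : 0 < u := lt_of_lt_of_le hε0 hu.1
    have hup : 0 < u + x := by linarith
    have hux1 : u + x ≤ 1 := by
      have : u ≤ A := hu.2
      have : x ≤ T := by rw [hxdef]; linarith
      have hA2T : A ≤ 2 * T := by rw [hAdef]; linarith
      nlinarith [hu₀e, hexp1, hu.2]
    have h9 : 9 ≤ -Real.log u := by
      have h1 : u ≤ Real.exp (-9) := le_trans (le_trans hu.2 hAu₀) hu₀e
      have := Real.log_le_log hu0 h1
      rw [Real.log_exp] at this; linarith
    have h6 : -Real.log u ≤ 6 * (-Real.log x) := by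
      have := Real.log_le_log hε0 hu.1
      linarith
    exact ⟨hu0, hup, hux1, Real.log_nonpos hup.le hux1, h9, h6⟩
  have hne : ∀ u ∈ Set.uIcc ε A, u ≠ 0 := by
    rw [Set.uIcc_of_le hεA]; intro u hu; exact (hpts u hu).1.ne'
  have hcF1 : ContinuousOn (fun u : ℝ => u ^ (-a) * |Real.log (u + x)| ^ (-b))
      (Set.uIcc ε A) := by
    apply ContinuousOn.mul
    · exact continuousOn_id.rpow_const fun u hu => Or.inl (hne u hu)
    · apply ContinuousOn.rpow_const
      · apply ContinuousOn.abs
        apply Real.continuousOn_log.comp (continuousOn_id.add continuousOn_const)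
        rw [Set.uIcc_of_le hεA]
        intro u hu
        have := (hpts u hu).2.1
        simp only [Set.mem_compl_iff, Set.mem_singleton_iff, id]
        exact this.ne'
      · rw [Set.uIcc_of_le hεA]
        intro u hu
        left
        rw [abs_ne_zero]
        obtain ⟨hu0, hup, hux1, -, h9, h6⟩ := hpts u hu
        have hb1 := (log_add_bound hu0 hx0 hux1 h9 h6).1
        intro h; rw [h] at hb1; linarith
  have hcF2 : ContinuousOn (fun u : ℝ => u ^ (-a) * |Real.log u| ^ (-b)) (Set.uIcc ε A) := by
    apply ContinuousOn.mul
    · exact continuousOn_id.rpow_const fun u hu => Or.inl (hne u hu)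
    · apply ContinuousOn.rpow_const
      · exact (Real.continuousOn_log.mono fun u hu => hne u hu).abs
      · rw [Set.uIcc_of_le hεA]
        intro u hu
        left
        rw [abs_ne_zero]
        have := (hpts u hu).2.2.2.2.1
        intro h; rw [h] at this; norm_num at this
  have hmono : (∫ u in ε..A, u ^ (-a) * |Real.log (u + x)| ^ (-b))
      ≤ ∫ u in ε..A, 12 ^ b * (u ^ (-a) * |Real.log u| ^ (-b)) := by
    apply intervalIntegral.integral_mono_on hεA hcF1.intervalIntegrable
      (hcF2.intervalIntegrable.const_mul _)
    intro u hu
    obtain ⟨hu0, hup, hux1, hlup, h9, h6⟩ := hpts u hu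
    have e1 : |Real.log (u + x)| = -Real.log (u + x) := abs_of_nonpos hlup
    have e2 : |Real.log u| = -Real.log u := abs_of_nonpos (by linarith)
    have hz : (0:ℝ) < -Real.log u := by linarith
    have hbd := log_add_bound hu0 hx0 hux1 h9 h6
    have hkey : (-Real.log (u + x)) ^ (-b) ≤ 12 ^ |b| * (-Real.log u) ^ (-b) := by
      apply pow_neg_bound b hz (by norm_num)
      · exact hbd.1
      · linarith [hbd.2, hz]
    rw [abs_of_nonneg hb.le] at hkey
    rw [e1, e2]
    have hpos : (0:ℝ) ≤ u ^ (-a) := (Real.rpow_pos_of_pos hu0 (-a)).le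
    linarith [mul_le_mul_of_nonneg_left hkey hpos]
  have haux := Haux ε A hε0 hεA hAu₀
  have e3 : ε ^ (1 - a) = lam0 T t ^ (2 * (1 - a)) := by
    rw [hεdef, ← Real.rpow_natCast (lam0 T t) 2, ← Real.rpow_mul hlm0.le]
    norm_num
  have hlogε : Real.log ε ≤ 0 := by linarith
  have e4 : |Real.log ε| ^ (-b) ≤ (-Real.log x) ^ (-b) := by
    rw [abs_of_nonpos hlogε]
    exact Real.rpow_le_rpow_of_nonpos hL0 hLε (by linarith)
  calc (∫ s in (-T)..(t - lam0 T t ^ 2), (t - s) ^ (-a) * |Real.log (T - s)| ^ (-b))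
      = ∫ u in ε..A, u ^ (-a) * |Real.log (u + x)| ^ (-b) := hsub
    _ ≤ ∫ u in ε..A, 12 ^ b * (u ^ (-a) * |Real.log u| ^ (-b)) := hmono
    _ = 12 ^ b * ∫ u in ε..A, u ^ (-a) * |Real.log u| ^ (-b) :=
        intervalIntegral.integral_const_mul _ _
    _ ≤ 12 ^ b * (2 / (a - 1) * (ε ^ (1 - a) * |Real.log ε| ^ (-b))) := by
        apply mul_le_mul_of_nonneg_left haux (by positivity)
    _ ≤ 12 ^ b * (2 / (a - 1) * (lam0 T t ^ (2 * (1 - a)) * (-Real.log x) ^ (-b))) := by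
        rw [← e3]
        apply mul_le_mul_of_nonneg_left _ (by positivity)
        apply mul_le_mul_of_nonneg_left _ (by positivity)
        apply mul_le_mul_of_nonneg_left e4 (by positivity)
    _ = 12 ^ b * (2 / (a - 1)) * lam0 T t ^ (2 * (1 - a)) / |Real.log x| ^ b := by
        rw [habsx, Real.rpow_neg hL0.le]
        ring

lemma lam0_est_b : (∀ μ l : ℝ, 0 < μ → μ < 1 → ∃ C > 0, ∃ T₀ > 0, T₀ ≤ 1 / 2 ∧
      ∀ T, 0 < T → T < T₀ → ∀ t, 0 ≤ t → t < T →
        (∫ s in (-T)..(t - lam0 T t ^ 2),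
            (T - s) ^ μ * (t - s) ^ (-(2 : ℝ)) * |Real.log (T - s)| ^ (-l))
          ≤ C * (T - t) ^ μ / (lam0 T t ^ 2 * |Real.log (T - t)| ^ l)) := by
  intro μ l hμ0 hμ1
  obtain ⟨u₁, hu₁, hu₁e, Haux₁⟩ := aux_ftc (2 - μ) l (by linarith)
  obtain ⟨u₂, hu₂, hu₂e, Haux₂⟩ := aux_ftc 2 l (by norm_num)
  set u₀ := min u₁ u₂ with hu₀def
  have hu₀ : 0 < u₀ := lt_min hu₁ hu₂
  have hu₀e : u₀ ≤ Real.exp (-9) := le_trans (min_le_left _ _) hu₁e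
  have hexp1 : Real.exp (-9) < 1 := by rw [Real.exp_lt_one_iff]; norm_num
  have h1μ : 0 < 1 - μ := by linarith
  refine ⟨2 * 12 ^ |l| * (2 / (1 - μ) + 2) * 6 ^ |l|, by positivity, u₀ / 4, by positivity,
    by linarith, ?_⟩
  intro T hT0 hTT₀ t ht htT
  have hTe : T ≤ Real.exp (-9) / 2 := by linarith
  obtain ⟨hlm0, hlm2x, hLε, hε6L, h9L, habsx⟩ := lam0_facts hT0 hTe ht htT
  have hx0 : 0 < T - t := by linarith
  set x : ℝ := T - t with hxdef
  set ε : ℝ := lam0 T t ^ 2 with hεdef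
  set A : ℝ := t + T with hAdef
  have hε0 : 0 < ε := by positivity
  have hεA : ε ≤ A := by rw [hAdef]; linarith
  have hAu₀ : A ≤ u₀ := by rw [hAdef]; linarith
  have hAu₁ : A ≤ u₁ := le_trans hAu₀ (min_le_left _ _)
  have hAu₂ : A ≤ u₂ := le_trans hAu₀ (min_le_right _ _)
  have hL0 : (0:ℝ) < -Real.log x := by linarith
  -- substitution
  have hsub : (∫ s in (-T)..(t - lam0 T t ^ 2),
        (T - s) ^ μ * (t - s) ^ (-(2:ℝ)) * |Real.log (T - s)| ^ (-l))
      = ∫ u in ε..A, (u + x) ^ μ * u ^ (-(2:ℝ)) * |Real.log (u + x)| ^ (-l) := by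
    have h1 : (∫ s in (-T)..(t - lam0 T t ^ 2),
          (T - s) ^ μ * (t - s) ^ (-(2:ℝ)) * |Real.log (T - s)| ^ (-l))
        = ∫ s in (-T)..(t - lam0 T t ^ 2),
            (fun u => (u + x) ^ μ * u ^ (-(2:ℝ)) * |Real.log (u + x)| ^ (-l)) (t - s) := by
      apply intervalIntegral.integral_congr
      intro s _
      simp only
      rw [show t - s + x = T - s by rw [hxdef]; ring]
    rw [h1, intervalIntegral.integral_comp_sub_left
      (fun u => (u + x) ^ μ * u ^ (-(2:ℝ)) * |Real.log (u + x)| ^ (-l)) t]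
    congr 1
    · rw [hεdef]; ring
    · rw [hAdef]; ring
  -- pointwise facts
  have hpts : ∀ u ∈ Set.Icc ε A, 0 < u ∧ 0 < u + x ∧ u + x ≤ 1 ∧ Real.log (u + x) ≤ 0 ∧
      9 ≤ -Real.log u ∧ -Real.log u ≤ 6 * (-Real.log x) := by
    intro u hu
    have hu0 : 0 < u := lt_of_lt_of_le hε0 hu.1
    have hup : 0 < u + x := by linarith
    have hux1 : u + x ≤ 1 := by
      have h1 : u ≤ A := hu.2
      have h2 : x ≤ T := by rw [hxdef]; linarith
      have hA2T : A ≤ 2 * T := by rw [hAdef]; linarith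
      nlinarith [hu₀e, hexp1, hu.2]
    have h9 : 9 ≤ -Real.log u := by
      have h1 : u ≤ Real.exp (-9) := le_trans (le_trans hu.2 hAu₀) hu₀e
      have := Real.log_le_log hu0 h1
      rw [Real.log_exp] at this; linarith
    have h6 : -Real.log u ≤ 6 * (-Real.log x) := by
      have := Real.log_le_log hε0 hu.1
      linarith
    exact ⟨hu0, hup, hux1, Real.log_nonpos hup.le hux1, h9, h6⟩
  have hne : ∀ u ∈ Set.uIcc ε A, u ≠ 0 := by
    rw [Set.uIcc_of_le hεA]; intro u hu; exact (hpts u hu).1.ne'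
  -- continuity
  have hclogu : ContinuousOn (fun u : ℝ => |Real.log u|) (Set.uIcc ε A) :=
    (Real.continuousOn_log.mono fun u hu => hne u hu).abs
  have hcloguNE : ∀ u ∈ Set.uIcc ε A, |Real.log u| ≠ 0 := by
    rw [Set.uIcc_of_le hεA]
    intro u hu
    rw [abs_ne_zero]
    have := (hpts u hu).2.2.2.2.1
    intro h; rw [h] at this; norm_num at this
  have hcG1 : ContinuousOn (fun u : ℝ => u ^ (-(2 - μ)) * |Real.log u| ^ (-l))
      (Set.uIcc ε A) :=
    (continuousOn_id.rpow_const fun u hu => Or.inl (hne u hu)).mul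
      (hclogu.rpow_const fun u hu => Or.inl (hcloguNE u hu))
  have hcG2 : ContinuousOn (fun u : ℝ => u ^ (-(2:ℝ)) * |Real.log u| ^ (-l))
      (Set.uIcc ε A) :=
    (continuousOn_id.rpow_const fun u hu => Or.inl (hne u hu)).mul
      (hclogu.rpow_const fun u hu => Or.inl (hcloguNE u hu))
  have hcG : ContinuousOn
      (fun u : ℝ => (u + x) ^ μ * u ^ (-(2:ℝ)) * |Real.log (u + x)| ^ (-l))
      (Set.uIcc ε A) := by
    have hupne : ∀ u ∈ Set.uIcc ε A, u + x ≠ 0 := by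
      rw [Set.uIcc_of_le hεA]; intro u hu; exact (hpts u hu).2.1.ne'
    apply ContinuousOn.mul
    · apply ContinuousOn.mul
      · exact (continuousOn_id.add continuousOn_const).rpow_const fun u hu => Or.inr hμ0.le
      · exact continuousOn_id.rpow_const fun u hu => Or.inl (hne u hu)
    · apply ContinuousOn.rpow_const
      · apply ContinuousOn.abs
        apply Real.continuousOn_log.comp (continuousOn_id.add continuousOn_const)
        intro u hu
        simp only [Set.mem_compl_iff, Set.mem_singleton_iff, id]
        exact hupne u hu
      · rw [Set.uIcc_of_le hεA]
        intro u hu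
        left
        rw [abs_ne_zero]
        obtain ⟨hu0, hup, hux1, -, h9, h6⟩ := hpts u hu
        have hb1 := (log_add_bound hu0 hx0 hux1 h9 h6).1
        intro h; rw [h] at hb1; linarith
  -- monotone comparison
  have hmono : (∫ u in ε..A, (u + x) ^ μ * u ^ (-(2:ℝ)) * |Real.log (u + x)| ^ (-l))
      ≤ ∫ u in ε..A, 2 * 12 ^ |l| * (u ^ (-(2 - μ)) * |Real.log u| ^ (-l)
          + x ^ μ * (u ^ (-(2:ℝ)) * |Real.log u| ^ (-l))) := by
    apply intervalIntegral.integral_mono_on hεA hcG.intervalIntegrable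
      (((hcG1.add (continuousOn_const.mul hcG2)).intervalIntegrable).const_mul _)
    intro u hu
    obtain ⟨hu0, hup, hux1, hlup, h9, h6⟩ := hpts u hu
    have hz : (0:ℝ) < -Real.log u := by linarith
    have hbd := log_add_bound hu0 hx0 hux1 h9 h6
    have hzp : (0:ℝ) < -Real.log (u + x) := by linarith [hbd.1]
    have e1 : |Real.log (u + x)| = -Real.log (u + x) := abs_of_nonpos hlup
    have e2 : |Real.log u| = -Real.log u := abs_of_nonpos (by linarith)
    have hkey : (-Real.log (u + x)) ^ (-l) ≤ 12 ^ |l| * (-Real.log u) ^ (-l) := by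
      apply pow_neg_bound l hz (by norm_num)
      · exact hbd.1
      · linarith [hbd.2, hz]
    have hux : (u + x) ^ μ ≤ 2 * (u ^ μ + x ^ μ) := by
      have hxμ : (0:ℝ) ≤ x ^ μ := Real.rpow_nonneg hx0.le μ
      have huμ : (0:ℝ) ≤ u ^ μ := Real.rpow_nonneg hu0.le μ
      have h2μ : (2:ℝ) ^ μ ≤ 2 := by
        have h2 : (2:ℝ) ^ μ ≤ 2 ^ (1:ℝ) :=
          Real.rpow_le_rpow_of_exponent_le (by norm_num) hμ1.le
        rwa [Real.rpow_one] at h2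
      rcases le_total u x with h | h
      · have l1 : (u + x) ^ μ ≤ (2 * x) ^ μ :=
          Real.rpow_le_rpow (by positivity) (by linarith) hμ0.le
        rw [Real.mul_rpow (by norm_num) hx0.le] at l1
        linarith [mul_le_mul_of_nonneg_right h2μ hxμ]
      · have l1 : (u + x) ^ μ ≤ (2 * u) ^ μ :=
          Real.rpow_le_rpow (by positivity) (by linarith) hμ0.le
        rw [Real.mul_rpow (by norm_num) hu0.le] at l1
        linarith [mul_le_mul_of_nonneg_right h2μ huμ]
    have eu : u ^ μ * u ^ (-(2:ℝ)) = u ^ (-(2 - μ)) := by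
      rw [show (-(2 - μ) : ℝ) = μ + -(2:ℝ) by ring, Real.rpow_add hu0]
    simp only [Pi.add_apply, Pi.mul_apply]
    rw [e1, e2]
    have hu2 : (0:ℝ) ≤ u ^ (-(2:ℝ)) := Real.rpow_nonneg hu0.le _
    calc (u + x) ^ μ * u ^ (-(2:ℝ)) * (-Real.log (u + x)) ^ (-l)
        ≤ 2 * (u ^ μ + x ^ μ) * u ^ (-(2:ℝ)) * (12 ^ |l| * (-Real.log u) ^ (-l)) := by
          apply mul_le_mul (mul_le_mul_of_nonneg_right hux hu2) hkey
            (Real.rpow_nonneg hzp.le _) (by positivity)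
      _ = 2 * 12 ^ |l| * ((u ^ μ * u ^ (-(2:ℝ))) * (-Real.log u) ^ (-l)
            + x ^ μ * (u ^ (-(2:ℝ)) * (-Real.log u) ^ (-l))) := by ring
      _ = 2 * 12 ^ |l| * (u ^ (-(2 - μ)) * (-Real.log u) ^ (-l)
            + x ^ μ * (u ^ (-(2:ℝ)) * (-Real.log u) ^ (-l))) := by rw [eu]
  -- split integral
  have hsplit : (∫ u in ε..A, 2 * 12 ^ |l| * (u ^ (-(2 - μ)) * |Real.log u| ^ (-l)
          + x ^ μ * (u ^ (-(2:ℝ)) * |Real.log u| ^ (-l))))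
      = 2 * 12 ^ |l| * ((∫ u in ε..A, u ^ (-(2 - μ)) * |Real.log u| ^ (-l))
          + x ^ μ * ∫ u in ε..A, u ^ (-(2:ℝ)) * |Real.log u| ^ (-l)) := by
    rw [intervalIntegral.integral_const_mul,
      intervalIntegral.integral_add hcG1.intervalIntegrable
        (hcG2.intervalIntegrable.const_mul _),
      intervalIntegral.integral_const_mul]
  -- apply aux estimates
  have haux1 := Haux₁ ε A hε0 hεA hAu₁
  have haux2 := Haux₂ ε A hε0 hεA hAu₂
  rw [show (2 - μ - 1 : ℝ) = 1 - μ by ring, show (1 - (2 - μ) : ℝ) = μ - 1 by ring] at haux1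
  rw [show ((2:ℝ) - 1) = 1 by norm_num, show (1 - (2:ℝ)) = -1 by norm_num, div_one] at haux2
  set E : ℝ := |Real.log ε| ^ (-l) with hEdef
  have hE : (0:ℝ) ≤ E := by rw [hEdef]; positivity
  have hlogε : Real.log ε ≤ 0 := by linarith
  have hεμ : ε ^ (μ - 1) ≤ x ^ μ * ε ^ (-1 : ℝ) := by
    rw [show (μ - 1 : ℝ) = μ + (-1) by ring, Real.rpow_add hε0]
    exact mul_le_mul_of_nonneg_right (Real.rpow_le_rpow hε0.le hlm2x hμ0.le)
      (Real.rpow_nonneg hε0.le _)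
  have hE6 : E ≤ 6 ^ |l| * (-Real.log x) ^ (-l) := by
    rw [hEdef, abs_of_nonpos hlogε]
    apply pow_neg_bound l hL0 (by norm_num)
    · linarith
    · linarith
  have key : (∫ u in ε..A, u ^ (-(2 - μ)) * |Real.log u| ^ (-l))
      + x ^ μ * (∫ u in ε..A, u ^ (-(2:ℝ)) * |Real.log u| ^ (-l))
      ≤ (2 / (1 - μ) + 2) * ((x ^ μ * ε ^ (-1:ℝ)) * E) := by
    have hxμ : (0:ℝ) ≤ x ^ μ := Real.rpow_nonneg hx0.le μ
    have t1 : 2 / (1 - μ) * (ε ^ (μ - 1) * E)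
        ≤ 2 / (1 - μ) * ((x ^ μ * ε ^ (-1:ℝ)) * E) :=
      mul_le_mul_of_nonneg_left (mul_le_mul_of_nonneg_right hεμ hE) (by positivity)
    have t2 : x ^ μ * (∫ u in ε..A, u ^ (-(2:ℝ)) * |Real.log u| ^ (-l))
        ≤ x ^ μ * (2 * (ε ^ (-1:ℝ) * E)) := mul_le_mul_of_nonneg_left haux2 hxμ
    have t3 := le_trans haux1 t1
    linarith
  calc (∫ s in (-T)..(t - lam0 T t ^ 2),
        (T - s) ^ μ * (t - s) ^ (-(2:ℝ)) * |Real.log (T - s)| ^ (-l))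
      = ∫ u in ε..A, (u + x) ^ μ * u ^ (-(2:ℝ)) * |Real.log (u + x)| ^ (-l) := hsub
    _ ≤ ∫ u in ε..A, 2 * 12 ^ |l| * (u ^ (-(2 - μ)) * |Real.log u| ^ (-l)
          + x ^ μ * (u ^ (-(2:ℝ)) * |Real.log u| ^ (-l))) := hmono
    _ = 2 * 12 ^ |l| * ((∫ u in ε..A, u ^ (-(2 - μ)) * |Real.log u| ^ (-l))
          + x ^ μ * ∫ u in ε..A, u ^ (-(2:ℝ)) * |Real.log u| ^ (-l)) := hsplit
    _ ≤ 2 * 12 ^ |l| * ((2 / (1 - μ) + 2) * ((x ^ μ * ε ^ (-1:ℝ)) * E)) :=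
        mul_le_mul_of_nonneg_left key (by positivity)
    _ ≤ 2 * 12 ^ |l| * ((2 / (1 - μ) + 2) * ((x ^ μ * ε ^ (-1:ℝ))
          * (6 ^ |l| * (-Real.log x) ^ (-l)))) := by
        apply mul_le_mul_of_nonneg_left _ (by positivity)
        apply mul_le_mul_of_nonneg_left _ (by positivity)
        apply mul_le_mul_of_nonneg_left hE6 (by positivity)
    _ = 2 * 12 ^ |l| * (2 / (1 - μ) + 2) * 6 ^ |l| * x ^ μ / (ε * |Real.log x| ^ l) := by
        rw [habsx, Real.rpow_neg hL0.le, Real.rpow_neg_one]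
        ring

/-- Integral estimates for the kernels appearing in the nonlocal `λ`–`α` system:
(a) for `a > 1`, `b > 0`, `∫_{−T}^{t−λ₀(t)²} (t−s)^{−a} |log(T−s)|^{−b} ds
 ≤ C λ₀(t)^{2(1−a)} / |log(T−t)|^{b}`;
(b) for `μ ∈ (0,1)`, `l ∈ ℝ`, `∫_{−T}^{t−λ₀(t)²} (T−s)^{μ} (t−s)^{−2} |log(T−s)|^{−l} ds
 ≤ C (T−t)^{μ} / (λ₀(t)² |log(T−t)|^{l})`,
for all `0 ≤ t < T` with `T ∈ (0,1/2)` sufficiently small. -/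
theorem lam0_kernel_integral_estimates :
    (∀ a b : ℝ, 1 < a → 0 < b → ∃ C > 0, ∃ T₀ > 0, T₀ ≤ 1 / 2 ∧
      ∀ T, 0 < T → T < T₀ → ∀ t, 0 ≤ t → t < T →
        (∫ s in (-T)..(t - lam0 T t ^ 2), (t - s) ^ (-a) * |Real.log (T - s)| ^ (-b))
          ≤ C * lam0 T t ^ (2 * (1 - a)) / |Real.log (T - t)| ^ b) ∧
    (∀ μ l : ℝ, 0 < μ → μ < 1 → ∃ C > 0, ∃ T₀ > 0, T₀ ≤ 1 / 2 ∧
      ∀ T, 0 < T → T < T₀ → ∀ t, 0 ≤ t → t < T →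
        (∫ s in (-T)..(t - lam0 T t ^ 2),
            (T - s) ^ μ * (t - s) ^ (-(2 : ℝ)) * |Real.log (T - s)| ^ (-l))
          ≤ C * (T - t) ^ μ / (lam0 T t ^ 2 * |Real.log (T - t)| ^ l)) := by
  exact ⟨lam0_est_a, lam0_est_b⟩
end
end
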